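/- Envelope of rescaled tanh profiles. Let (M, dist) be a metric space, let u : M → ℝ be continuous, let α ∈ ℝ and x ∈ M. Consider L := limsup of the function (ε, y) ↦ tanh((u(y) − α)/ε) along the product filter (𝓝[(0,∞)] 0) ×ˢ (𝓝 x), i.e. ε → 0 with ε > 0 and y → x. Then: L = 1 if x belongs to the closure of {y : u(y) > α}; L = −1 if u(x) < α; and L = 0 otherwise (i.e. if u(x) = α and x is not in the closure of {u > α}). -/
import Mathlib
open Filter Topology

lemma tanh_formula (x : ℝ) : Real.tanh x =
    (1 - Real.exp (-(2*x))) / (1 + Real.exp (-(2*x))) := by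
  have e2 : Real.exp (-(2*x)) = Real.exp (-x) * Real.exp (-x) := by
    rw [← Real.exp_add]; ring_nf
  have hx : Real.exp x ≠ 0 := (Real.exp_pos x).ne'
  rw [Real.tanh_eq_sinh_div_cosh, Real.sinh_eq, Real.cosh_eq, e2, Real.exp_neg]
  field_simp

lemma tanh_lt_one (x : ℝ) : Real.tanh x < 1 := by
  rw [tanh_formula]
  have h : (0:ℝ) < Real.exp (-(2*x)) := Real.exp_pos _
  rw [div_lt_one (by linarith)]
  linarith

lemma neg_one_lt_tanh (x : ℝ) : -1 < Real.tanh x := by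
  rw [tanh_formula]
  have h : (0:ℝ) < Real.exp (-(2*x)) := Real.exp_pos _
  rw [lt_div_iff₀ (by linarith)]
  linarith

lemma tanh_nonpos {x : ℝ} (hx : x ≤ 0) : Real.tanh x ≤ 0 := by
  rw [Real.tanh_eq_sinh_div_cosh]
  exact div_nonpos_of_nonpos_of_nonneg
    (by simpa using Real.sinh_le_sinh.2 hx) (Real.cosh_pos x).le

lemma tendsto_tanh_atTop : Tendsto Real.tanh atTop (𝓝 1) := by
  have he : Tendsto (fun x : ℝ => Real.exp (-(2*x))) atTop (𝓝 0) := by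
    have h2 : Tendsto (fun x : ℝ => 2 * x) atTop atTop :=
      tendsto_id.const_mul_atTop (by norm_num : (0:ℝ) < 2)
    exact (Real.tendsto_exp_neg_atTop_nhds_zero.comp h2).congr fun x => by simp
  have : Tendsto (fun x : ℝ => (1 - Real.exp (-(2*x))) / (1 + Real.exp (-(2*x))))
      atTop (𝓝 ((1 - 0) / (1 + 0))) :=
    (tendsto_const_nhds.sub he).div (tendsto_const_nhds.add he) (by norm_num)
  simpa [tanh_formula] using this.congr fun x => (tanh_formula x).symm

lemma tendsto_tanh_atBot : Tendsto Real.tanh atBot (𝓝 (-1)) := by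
  have := (tendsto_tanh_atTop.comp tendsto_neg_atBot_atTop).neg
  simpa [Function.comp, Real.tanh_neg] using this

theorem tanh_profile_envelope {M : Type*} [MetricSpace M]
    (u : M → ℝ) (hu : Continuous u) (α : ℝ) (x : M) :
    (x ∈ closure {y | α < u y} →
      limsup (fun p : ℝ × M => Real.tanh ((u p.2 - α) / p.1))
        ((𝓝[Set.Ioi (0 : ℝ)] 0) ×ˢ 𝓝 x) = 1) ∧
    (u x < α →
      limsup (fun p : ℝ × M => Real.tanh ((u p.2 - α) / p.1))
        ((𝓝[Set.Ioi (0 : ℝ)] 0) ×ˢ 𝓝 x) = -1) ∧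
    (u x = α → x ∉ closure {y | α < u y} →
      limsup (fun p : ℝ × M => Real.tanh ((u p.2 - α) / p.1))
        ((𝓝[Set.Ioi (0 : ℝ)] 0) ×ˢ 𝓝 x) = 0) := by
  set F : Filter (ℝ × M) := (𝓝[Set.Ioi (0 : ℝ)] 0) ×ˢ 𝓝 x with hF
  set f : ℝ × M → ℝ := fun p => Real.tanh ((u p.2 - α) / p.1) with hf
  have hb : IsBoundedUnder (· ≤ ·) F f :=
    isBoundedUnder_of ⟨1, fun p => (tanh_lt_one _).le⟩
  have hb2 : IsBoundedUnder (· ≥ ·) F f :=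
    isBoundedUnder_of ⟨-1, fun p => (neg_one_lt_tanh _).le⟩
  have hco : IsCoboundedUnder (· ≤ ·) F f := hb2.isCoboundedUnder_flip
  refine ⟨?_, ?_, ?_⟩
  · intro hx
    apply le_antisymm
    · exact limsup_le_of_le hco (Eventually.of_forall fun p => (tanh_lt_one _).le)
    · refine le_of_forall_lt_imp_le_of_dense fun a ha => ?_
      refine le_limsup_of_frequently_le ?_ hb
      rw [frequently_iff]
      intro U hU
      rw [hF, mem_prod_iff] at hU
      obtain ⟨S, hS, T, hT, hST⟩ := hU
      obtain ⟨y, hyT, hyu⟩ := mem_closure_iff_nhds.1 hx T hT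
      have hδ : 0 < u y - α := sub_pos.2 hyu
      have h1 : Tendsto (fun ε : ℝ => (u y - α) / ε) (𝓝[Set.Ioi (0:ℝ)] 0) atTop := by
        simpa [div_eq_mul_inv] using tendsto_inv_nhdsGT_zero.const_mul_atTop hδ
      have hev : ∀ᶠ ε in 𝓝[Set.Ioi (0:ℝ)] 0, a < Real.tanh ((u y - α) / ε) :=
        (tendsto_tanh_atTop.comp h1).eventually (eventually_gt_nhds ha)
      obtain ⟨ε, hεa, hεS⟩ := (hev.and (eventually_mem_set.mpr hS)).exists
      exact ⟨(ε, y), hST ⟨hεS, hyT⟩, hεa.le⟩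
  · intro hx
    apply Tendsto.limsup_eq
    have h1 : Tendsto (fun p : ℝ × M => u p.2 - α) F (𝓝 (u x - α)) :=
      ((hu.tendsto x).comp tendsto_snd).sub tendsto_const_nhds
    have h2 : Tendsto (fun p : ℝ × M => (p.1)⁻¹) F atTop :=
      tendsto_inv_nhdsGT_zero.comp tendsto_fst
    have h3 : Tendsto (fun p : ℝ × M => (u p.2 - α) * (p.1)⁻¹) F atBot :=
      h1.neg_mul_atTop (sub_neg.2 hx) h2
    exact (tendsto_tanh_atBot.comp h3).congr fun p => by
      simp [hf, Function.comp, div_eq_mul_inv]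
  · intro hx hcl
    apply le_antisymm
    · rw [mem_closure_iff_nhds] at hcl
      push_neg at hcl
      obtain ⟨T, hT, hTe⟩ := hcl
      have h2 : ∀ᶠ p : ℝ × M in F, p.2 ∈ T :=
        tendsto_snd.eventually (eventually_mem_set.mpr hT)
      have h1 : ∀ᶠ p : ℝ × M in F, p.1 ∈ Set.Ioi (0:ℝ) :=
        tendsto_fst.eventually (eventually_mem_set.mpr self_mem_nhdsWithin)
      refine limsup_le_of_le hco ?_
      filter_upwards [h1, h2] with p hp1 hp2
      have hle : u p.2 ≤ α := not_lt.1 fun h =>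
        Set.eq_empty_iff_forall_notMem.mp hTe p.2 ⟨hp2, h⟩
      exact tanh_nonpos (div_nonpos_of_nonpos_of_nonneg (sub_nonpos.2 hle) (le_of_lt hp1))
    · refine le_limsup_of_frequently_le ?_ hb
      rw [frequently_iff]
      intro U hU
      rw [hF, mem_prod_iff] at hU
      obtain ⟨S, hS, T, hT, hST⟩ := hU
      obtain ⟨ε, hεS⟩ := Filter.nonempty_of_mem hS
      exact ⟨(ε, x), hST ⟨hεS, mem_of_mem_nhds hT⟩, by simp [hf, hx]⟩
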